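/- Let 𝕂 be an algebraically closed field of characteristic 0 and let σ = Σ_{i=1}^{r'} ωᵢ·e_{ξᵢ} with ω₁,…,ω_{r'} nonzero polynomials in n variables and ξ₁,…,ξ_{r'} ∈ 𝕂ⁿ pairwise distinct. Then the zero set in 𝕂ⁿ of the ideal I_σ = ker H_σ is exactly {ξ₁,…,ξ_{r'}}, i.e. the points ξ₁,…,ξ_{r'} are precisely the common roots of the polynomials p ∈ 𝕂[x] such that σ(p·q) = 0 for all q ∈ 𝕂[x]. -/

import Mathlib

open MvPolynomial

namespace PolyExp

variable {K : Type*} [Field K] {n : ℕ}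

/-- The iterated partial derivative operator `∂^β` on polynomials. -/
noncomputable def pderivPow (β : Fin n →₀ ℕ) :
    Module.End K (MvPolynomial (Fin n) K) :=
  (List.ofFn fun i : Fin n =>
    ((MvPolynomial.pderiv i).toLinearMap : Module.End K (MvPolynomial (Fin n) K)) ^ (β i)).prod

/-- The constant coefficient differential operator `ω(∂) = Σ_β ω_β ∂^β`. -/
noncomputable def diffOp (ω : MvPolynomial (Fin n) K) :
    Module.End K (MvPolynomial (Fin n) K) :=
  ∑ β ∈ ω.support, ω.coeff β • pderivPow β

/-- The evaluation linear form `e_ξ : p ↦ p(ξ)`. -/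
noncomputable def evalDual (ξ : Fin n → K) : Module.Dual K (MvPolynomial (Fin n) K) :=
  (MvPolynomial.aeval ξ).toLinearMap

/-- The polynomial-exponential linear form `ω·e_ξ : p ↦ (ω(∂)p)(ξ)`. -/
noncomputable def polyExpDual (ω : MvPolynomial (Fin n) K) (ξ : Fin n → K) :
    Module.Dual K (MvPolynomial (Fin n) K) :=
  evalDual ξ ∘ₗ diffOp ω

/-- The Hankel operator `H_σ : p ↦ (q ↦ σ(p·q))`. -/
noncomputable def hankel (σ : Module.Dual K (MvPolynomial (Fin n) K)) :
    MvPolynomial (Fin n) K →ₗ[K] Module.Dual K (MvPolynomial (Fin n) K) :=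
  (LinearMap.llcomp K (MvPolynomial (Fin n) K) (MvPolynomial (Fin n) K) K σ) ∘ₗ
    (LinearMap.mul K (MvPolynomial (Fin n) K))

/-- `μ(ω)`: the dimension of the span of all partial derivatives of `ω`. -/
noncomputable def mu (ω : MvPolynomial (Fin n) K) : ℕ :=
  Module.finrank K (Submodule.span K (Set.range fun β : Fin n →₀ ℕ => pderivPow β ω))

/-- The kernel `I_σ` of the Hankel operator, as an ideal. -/
def hankelKer (σ : Module.Dual K (MvPolynomial (Fin n) K)) : Ideal (MvPolynomial (Fin n) K) where
  carrier := {p | ∀ q, σ (p * q) = 0}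
  add_mem' := by
    intro a b ha hb q
    rw [add_mul, map_add, ha q, hb q, add_zero]
  zero_mem' := by
    intro q
    rw [zero_mul, map_zero]
  smul_mem' := by
    intro c p hp q
    rw [smul_eq_mul, mul_comm c p, mul_assoc]
    exact hp (c * q)

end PolyExp

namespace PolyExpAux


variable {K : Type*} [Field K] {n : ℕ}

lemma coeff_pderiv (i : Fin n) (γ : Fin n →₀ ℕ) (h : MvPolynomial (Fin n) K) :
    coeff γ (pderiv i h) = (γ i + 1 : ℕ) * coeff (γ + Finsupp.single i 1) h := by
  induction h using MvPolynomial.induction_on' with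
  | add p q hp hq => simp [hp, hq, mul_add]
  | monomial s a =>
    rw [pderiv_monomial, coeff_monomial, coeff_monomial]
    by_cases hs : s i = 0
    · have h1 : ¬ (s = γ + Finsupp.single i 1) := by
        intro h
        have : s i = γ i + 1 := by rw [h]; simp
        omega
      rw [if_neg h1]
      split_ifs with h2
      · subst h2; simp [hs]
      · simp
    · have key : (s - Finsupp.single i 1 = γ) ↔ (s = γ + Finsupp.single i 1) := by
        constructor
        · intro h; rw [← h]; ext j
          by_cases hj : j = i
          · subst hj; simp [Nat.sub_add_cancel (Nat.one_le_iff_ne_zero.2 hs)]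
          · simp [Finsupp.single_apply, Ne.symm hj]
        · intro h; rw [h]; ext j
          by_cases hj : j = i
          · subst hj; simp
          · simp [Finsupp.single_apply, Ne.symm hj]
      by_cases h1 : s - Finsupp.single i 1 = γ
      · rw [if_pos h1, if_pos (key.1 h1)]
        have := key.1 h1
        subst this
        simp [mul_comm]
      · rw [if_neg h1, if_neg (fun h => h1 (key.2 h))]
        ring



variable {K : Type*} [Field K] {n : ℕ}

lemma pderiv_commute (i j : Fin n) :
    Commute ((pderiv i).toLinearMap : Module.End K (MvPolynomial (Fin n) K))
      (pderiv j).toLinearMap := by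
  rcases eq_or_ne i j with rfl | hij
  · exact Commute.refl _
  · apply LinearMap.ext
    intro h
    simp only [Module.End.mul_apply, Derivation.coeFn_coe]
    induction h using MvPolynomial.induction_on' with
    | add p q hp hq => simp only [map_add, hp, hq]
    | monomial s a =>
      simp only [pderiv_monomial]
      have hsij : (s - Finsupp.single j 1 : Fin n →₀ ℕ) i = s i := by
        simp [Finsupp.single_apply, Ne.symm hij]
      have hsji : (s - Finsupp.single i 1 : Fin n →₀ ℕ) j = s j := by
        simp [Finsupp.single_apply, hij]
      rw [hsij, hsji]
      rw [tsub_right_comm (a := s) (b := Finsupp.single j 1) (c := Finsupp.single i 1)]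
      ring_nf

lemma pderivPow_zero : (PolyExp.pderivPow (K := K) (n := n) 0) = 1 := by
  unfold PolyExp.pderivPow
  simp only [Finsupp.coe_zero, Pi.zero_apply, pow_zero]
  rw [show (List.ofFn fun _ : Fin n => (1 : Module.End K (MvPolynomial (Fin n) K))) =
    List.replicate n 1 by simp [List.ofFn_const]]
  simp

lemma pderivPow_add_single (β : Fin n →₀ ℕ) (i : Fin n) :
    PolyExp.pderivPow (K := K) (β + Finsupp.single i 1) =
      PolyExp.pderivPow β * (pderiv i).toLinearMap := by
  classical
  set D : Fin n → Module.End K (MvPolynomial (Fin n) K) :=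
    fun j => (pderiv j).toLinearMap with hD
  have hfn : (fun j : Fin n => D j ^ ((β + Finsupp.single i 1 : Fin n →₀ ℕ) j)) =
      Function.update (fun j => D j ^ β j) i (D i ^ β i * D i) := by
    funext j
    rcases eq_or_ne j i with rfl | hj
    · simp [pow_succ]
    · simp [Function.update_of_ne hj, Finsupp.single_apply, Ne.symm hj]
  unfold PolyExp.pderivPow
  rw [hfn]
  rw [List.ofFn_eq_map, List.ofFn_eq_map,
    (List.nodup_finRange n).map_update, if_pos (List.mem_finRange i),
    List.idxOf_finRange]
  set L : List (Module.End K (MvPolynomial (Fin n) K)) :=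
    (List.finRange n).map fun j => D j ^ β j with hL
  have hlen : (i : ℕ) < L.length := by simp [hL]
  have hself : L.set i (D i ^ β i) = L := by
    apply List.ext_getElem (by simp)
    intro k h1 h2
    rcases eq_or_ne k (i : ℕ) with rfl | hk
    · simp [hL]
    · rw [List.getElem_set_ne (Ne.symm hk)]
  have hcomm : Commute (D i) ((L.drop ((i : ℕ) + 1)).prod) := by
    apply Commute.list_prod_right
    intro x hx
    have hx' : x ∈ L := List.mem_of_mem_drop hx
    obtain ⟨j, -, rfl⟩ := List.mem_map.1 hx'
    exact (pderiv_commute i j).pow_right _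
  have hps : ∀ a : Module.End K (MvPolynomial (Fin n) K),
      (L.set i a).prod = (L.take (i : ℕ)).prod * a * (L.drop ((i : ℕ)+1)).prod := by
    intro a
    rw [List.prod_set, if_pos hlen]
  conv_lhs => rw [hps]
  conv_rhs => rw [← hself, hps]
  rw [← mul_assoc (L.take (i:ℕ)).prod (D i ^ β i) (D i),
    mul_assoc _ (D i) _, hcomm.eq, ← mul_assoc]


/-- degree of an exponent vector -/
def deg (γ : Fin n →₀ ℕ) : ℕ := γ.sum fun _ e => e

lemma deg_add (a b : Fin n →₀ ℕ) : deg (a + b) = deg a + deg b :=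
  Finsupp.sum_add_index' (fun _ => rfl) (fun _ _ _ => rfl)

lemma deg_eq_zero {γ : Fin n →₀ ℕ} (h : deg γ = 0) : γ = 0 := by
  ext j
  by_contra hj
  have hmem : j ∈ γ.support := Finsupp.mem_support_iff.2 hj
  have := Finset.sum_eq_zero_iff.1 h j hmem
  exact hj this

lemma exists_decomp {β : Fin n →₀ ℕ} (h : β ≠ 0) :
    ∃ (β' : Fin n →₀ ℕ) (i : Fin n), β = β' + Finsupp.single i 1 ∧ deg β = deg β' + 1 := by
  obtain ⟨i, hi⟩ : ∃ i, β i ≠ 0 := by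
    by_contra hc
    push_neg at hc
    exact h (Finsupp.ext hc)
  refine ⟨β - Finsupp.single i 1, i, ?_, ?_⟩
  · ext j
    rcases eq_or_ne j i with rfl | hj
    · simp [Nat.sub_add_cancel (Nat.one_le_iff_ne_zero.2 hi)]
    · simp [Finsupp.single_apply, Ne.symm hj]
  · have : β = (β - Finsupp.single i 1) + Finsupp.single i 1 := by
      ext j
      rcases eq_or_ne j i with rfl | hj
      · simp [Nat.sub_add_cancel (Nat.one_le_iff_ne_zero.2 hi)]
      · simp [Finsupp.single_apply, Ne.symm hj]
    conv_lhs => rw [this]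
    rw [deg_add]
    simp [deg, Finsupp.sum_single_index]

/-- Master formula for coefficients of iterated derivatives. -/
lemma coeff_pderivPow (β γ : Fin n →₀ ℕ) (h : MvPolynomial (Fin n) K) :
    coeff γ (PolyExp.pderivPow (K := K) β h) =
      ((∏ i, (γ i + β i).descFactorial (β i) : ℕ) : K) * coeff (γ + β) h := by
  suffices H : ∀ (d : ℕ) (β γ : Fin n →₀ ℕ) (h : MvPolynomial (Fin n) K), deg β = d →
      coeff γ (PolyExp.pderivPow (K := K) β h) =
        ((∏ i, (γ i + β i).descFactorial (β i) : ℕ) : K) * coeff (γ + β) h from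
    H (deg β) β γ h rfl
  intro d
  induction d with
  | zero =>
    intro β γ h hd
    have hβ : β = 0 := deg_eq_zero hd
    subst hβ
    simp [pderivPow_zero]
  | succ d ih =>
    intro β γ h hd
    have hβ : β ≠ 0 := by
      intro hc; rw [hc] at hd; simp [deg] at hd
    obtain ⟨β', i, rfl, hdeg⟩ := exists_decomp hβ
    have hd' : deg β' = d := by omega
    rw [pderivPow_add_single]
    rw [Module.End.mul_apply, ih β' γ _ hd']
    rw [show ((pderiv i).toLinearMap h : MvPolynomial (Fin n) K) = pderiv i h from rfl]
    rw [coeff_pderiv]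
    have hexp : γ + (β' + Finsupp.single i 1) = (γ + β') + Finsupp.single i 1 :=
      (add_assoc γ β' _).symm
    rw [hexp, ← mul_assoc]
    congr 1
    have key : (∏ j, (γ j + β' j).descFactorial (β' j)) * ((γ + β' : Fin n →₀ ℕ) i + 1)
        = ∏ j, (γ j + (β' + Finsupp.single i 1 : Fin n →₀ ℕ) j).descFactorial
            ((β' + Finsupp.single i 1 : Fin n →₀ ℕ) j) := by
      rw [← Finset.mul_prod_erase Finset.univ
            (fun j => (γ j + β' j).descFactorial (β' j)) (Finset.mem_univ i),
          ← Finset.mul_prod_erase Finset.univ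
            (fun j => (γ j + (β' + Finsupp.single i 1 : Fin n →₀ ℕ) j).descFactorial
              ((β' + Finsupp.single i 1 : Fin n →₀ ℕ) j)) (Finset.mem_univ i)]
      have hpr : ∀ j ∈ Finset.univ.erase i,
          (γ j + (β' + Finsupp.single i 1 : Fin n →₀ ℕ) j).descFactorial
            ((β' + Finsupp.single i 1 : Fin n →₀ ℕ) j)
          = (γ j + β' j).descFactorial (β' j) := by
        intro j hj
        have hji : j ≠ i := (Finset.mem_erase.1 hj).1
        simp [Finsupp.single_apply, Ne.symm hji]
      rw [Finset.prod_congr rfl hpr]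
      have h1 : (β' + Finsupp.single i 1 : Fin n →₀ ℕ) i = β' i + 1 := by simp
      have h2 : (γ + β' : Fin n →₀ ℕ) i = γ i + β' i := by simp
      rw [h1, h2, show γ i + (β' i + 1) = (γ i + β' i) + 1 by omega,
        Nat.succ_descFactorial_succ]
      ring
    rw [← Nat.cast_mul, key]


/-- Translation by `c`: `p(x) ↦ p(x + c)`. -/
noncomputable def tr (c : Fin n → K) : MvPolynomial (Fin n) K →ₐ[K] MvPolynomial (Fin n) K :=
  aeval (fun i => X i + C (c i))

lemma tr_pderiv (c : Fin n → K) (i : Fin n) (p : MvPolynomial (Fin n) K) :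
    pderiv i (tr c p) = tr c (pderiv i p) := by
  induction p using MvPolynomial.induction_on with
  | C a => simp [tr]
  | add p q hp hq => simp [hp, hq]
  | mul_X p j hp =>
    have l1 : tr c (p * X j) = tr c p * tr c (X j) := map_mul _ _ _
    have l2 : pderiv i (p * X j) = pderiv i p * X j + p * pderiv i (X j) := pderiv_mul
    rw [l1, pderiv_mul, hp, l2, map_add, map_mul, map_mul]
    congr 2
    rcases eq_or_ne i j with rfl | hij
    · simp [tr]
    · simp [tr, pderiv_X_of_ne (Ne.symm hij)]

lemma tr_pderivPow (c : Fin n → K) (β : Fin n →₀ ℕ) (p : MvPolynomial (Fin n) K) :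
    PolyExp.pderivPow (K := K) β (tr c p) = tr c (PolyExp.pderivPow (K := K) β p) := by
  suffices H : ∀ (d : ℕ) (β : Fin n →₀ ℕ) (p : MvPolynomial (Fin n) K), deg β = d →
      PolyExp.pderivPow (K := K) β (tr c p) = tr c (PolyExp.pderivPow (K := K) β p) from
    H (deg β) β p rfl
  intro d
  induction d with
  | zero =>
    intro β p hd
    rw [deg_eq_zero hd, pderivPow_zero]
    simp
  | succ d ih =>
    intro β p hd
    have hβ : β ≠ 0 := by
      intro hc; rw [hc] at hd; simp [deg] at hd
    obtain ⟨β', i, rfl, hdeg⟩ := exists_decomp hβ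
    have hd' : deg β' = d := by omega
    rw [pderivPow_add_single, Module.End.mul_apply, Module.End.mul_apply]
    rw [show ((pderiv i).toLinearMap (tr c p) : MvPolynomial (Fin n) K)
      = pderiv i (tr c p) from rfl]
    rw [tr_pderiv, ih β' _ hd']
    rfl

lemma aeval_eq_constantCoeff_tr (ξ : Fin n → K) (p : MvPolynomial (Fin n) K) :
    aeval ξ p = constantCoeff (tr ξ p) := by
  have h : (constantCoeff : MvPolynomial (Fin n) K →+* K).comp
      ((tr ξ : MvPolynomial (Fin n) K →ₐ[K] MvPolynomial (Fin n) K) :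
        MvPolynomial (Fin n) K →+* MvPolynomial (Fin n) K)
      = ((aeval ξ : MvPolynomial (Fin n) K →ₐ[K] K) :
        MvPolynomial (Fin n) K →+* K) := by
    apply MvPolynomial.ringHom_ext
    · intro a; simp [tr]
    · intro i; simp [tr]
  exact (RingHom.congr_fun h p).symm

lemma tr_tr (c d : Fin n → K) (p : MvPolynomial (Fin n) K) :
    tr c (tr d p) = tr (fun k => c k + d k) p := by
  have h : (tr (K := K) c).comp (tr d) = tr (fun k => c k + d k) := by
    apply MvPolynomial.algHom_ext
    intro i
    simp [tr, add_assoc]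
  exact AlgHom.congr_fun h p

lemma tr_surjective (c : Fin n → K) : Function.Surjective (tr (K := K) (n := n) c) := by
  intro Q
  refine ⟨tr (fun k => - c k) Q, ?_⟩
  rw [tr_tr]
  have : (fun k => c k + - c k) = (0 : Fin n → K) := by funext k; simp
  rw [this]
  have h0 : tr (K := K) (n := n) 0 = AlgHom.id K (MvPolynomial (Fin n) K) := by
    apply MvPolynomial.algHom_ext
    intro i
    simp [tr]
  rw [h0]
  rfl

/-- `polyExpDual` in terms of coefficients of the translated polynomial. -/
lemma polyExpDual_eq (ω : MvPolynomial (Fin n) K) (ξ : Fin n → K) (p : MvPolynomial (Fin n) K) :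
    PolyExp.polyExpDual ω ξ p
      = ∑ β ∈ ω.support, ω.coeff β *
          (((∏ i, (β i).descFactorial (β i) : ℕ) : K) * coeff β (tr ξ p)) := by
  unfold PolyExp.polyExpDual PolyExp.diffOp PolyExp.evalDual
  rw [LinearMap.comp_apply, LinearMap.sum_apply, map_sum]
  apply Finset.sum_congr rfl
  intro β hβ
  rw [LinearMap.smul_apply, LinearMap.map_smul, smul_eq_mul]
  congr 1
  rw [show ((aeval ξ).toLinearMap ((PolyExp.pderivPow (K := K) β) p) : K)
      = aeval ξ ((PolyExp.pderivPow (K := K) β) p) from rfl,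
    aeval_eq_constantCoeff_tr, ← tr_pderivPow, constantCoeff_eq]
  have h0 := coeff_pderivPow (K := K) β 0 (tr ξ p)
  rw [zero_add] at h0
  simpa using h0


/-- All monomials of `h` have degree at least `m`. -/
def MD (m : ℕ) (h : MvPolynomial (Fin n) K) : Prop :=
  ∀ γ, coeff γ h ≠ 0 → m ≤ deg γ

lemma MD_mul {a b : ℕ} {p q : MvPolynomial (Fin n) K} (hp : MD a p) (hq : MD b q) :
    MD (a + b) (p * q) := by
  intro γ hγ
  rw [coeff_mul] at hγ
  obtain ⟨x, hx, hne⟩ := Finset.exists_ne_zero_of_sum_ne_zero hγ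
  rw [Finset.HasAntidiagonal.mem_antidiagonal] at hx
  have h1 : coeff x.1 p ≠ 0 := fun h => hne (by rw [h, zero_mul])
  have h2 : coeff x.2 q ≠ 0 := fun h => hne (by rw [h, mul_zero])
  have := add_le_add (hp _ h1) (hq _ h2)
  rwa [← deg_add, hx] at this

lemma MD_pow {g : MvPolynomial (Fin n) K} (hg : MD 1 g) (N : ℕ) : MD N (g ^ N) := by
  induction N with
  | zero => intro γ _; exact Nat.zero_le _
  | succ N ih =>
    rw [pow_succ]
    exact (by omega : N + 1 = N + 1) ▸ MD_mul ih hg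

lemma MD_of_dvd {m : ℕ} {h H : MvPolynomial (Fin n) K} (hmd : MD m h) (hdvd : h ∣ H) :
    MD m H := by
  obtain ⟨t, rfl⟩ := hdvd
  have := MD_mul hmd (fun γ _ => Nat.zero_le _ : MD 0 t)
  rwa [add_zero] at this

lemma MD_one_of_cc {g : MvPolynomial (Fin n) K} (hg : constantCoeff g = 0) : MD 1 g := by
  intro γ hγ
  rcases Nat.eq_zero_or_pos (deg γ) with h0 | h1
  · exfalso
    rw [deg_eq_zero h0] at hγ
    rw [constantCoeff_eq] at hg
    exact hγ hg
  · exact h1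

/-- Vanishing: if `g^N` divides `F`, `g(ζ) = 0` and `N` exceeds the degree of `ω`,
then `ω·e_ζ` kills `F`. -/
lemma polyExpDual_eq_zero (ω g F : MvPolynomial (Fin n) K) (ζ : Fin n → K)
    (hg : aeval ζ g = 0) (N : ℕ) (hN : ω.totalDegree < N) (hdvd : g ^ N ∣ F) :
    PolyExp.polyExpDual ω ζ F = 0 := by
  have hMD : MD N (tr ζ F) := by
    have h1 : MD 1 (tr ζ g) :=
      MD_one_of_cc (by rw [← aeval_eq_constantCoeff_tr]; exact hg)
    refine MD_of_dvd (MD_pow h1 N) ?_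
    rw [← map_pow]
    exact map_dvd _ hdvd
  rw [polyExpDual_eq]
  apply Finset.sum_eq_zero
  intro β hβ
  have hdegβ : deg β < N := lt_of_le_of_lt (le_totalDegree hβ) hN
  have : coeff β (tr ζ F) = 0 := by
    by_contra hc
    exact absurd (hMD β hc) (by omega)
  rw [this, mul_zero, mul_zero]

/-- Nonvanishing: if `ω ≠ 0` and `f(ζ) ≠ 0`, some multiple of `f` is not killed by `ω·e_ζ`. -/
lemma exists_polyExpDual_ne_zero [CharZero K] (ω f : MvPolynomial (Fin n) K) (ζ : Fin n → K)
    (hω : ω ≠ 0) (hf : aeval ζ f ≠ 0) :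
    ∃ q, PolyExp.polyExpDual ω ζ (f * q) ≠ 0 := by
  obtain ⟨β₀, hβ₀s, hβ₀max⟩ : ∃ i ∈ ω.support, ∀ x ∈ ω.support, ¬ i < x := by
    obtain ⟨i, hi⟩ := Finset.exists_maximal (support_nonempty.2 hω)
    exact ⟨i, hi.prop, fun x hx hlt => lt_irrefl _ (hlt.trans_le (hi.2 hx hlt.le))⟩
  obtain ⟨q, hq⟩ := tr_surjective ζ (monomial β₀ (1 : K))
  refine ⟨q, ?_⟩
  rw [polyExpDual_eq]
  have htr : tr ζ (f * q) = tr ζ f * monomial β₀ 1 := by rw [map_mul, hq]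
  rw [htr]
  rw [Finset.sum_eq_single β₀]
  · have hc : coeff β₀ (tr ζ f * monomial β₀ (1 : K)) = constantCoeff (tr ζ f) := by
      rw [coeff_mul_monomial', if_pos le_rfl]
      simp [constantCoeff_eq]
    rw [hc]
    have h1 : coeff β₀ ω ≠ 0 := mem_support_iff.1 hβ₀s
    have h2 : ((∏ i, (β₀ i).descFactorial (β₀ i) : ℕ) : K) ≠ 0 := by
      rw [Nat.cast_ne_zero]
      apply Finset.prod_ne_zero_iff.2
      intro i _
      rw [Nat.descFactorial_self]
      exact Nat.factorial_ne_zero _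
    have h3 : constantCoeff (tr ζ f) ≠ 0 := by
      rw [← aeval_eq_constantCoeff_tr]; exact hf
    exact mul_ne_zero h1 (mul_ne_zero h2 h3)
  · intro β hβ hne
    have : ¬ (β₀ ≤ β) := by
      intro hle
      exact hβ₀max β hβ (lt_of_le_of_ne hle (Ne.symm hne))
    rw [coeff_mul_monomial', if_neg this, mul_zero, mul_zero]
  · intro hc
    exact absurd hβ₀s hc

lemma exists_sep (a b : Fin n → K) (hab : a ≠ b) :
    ∃ g : MvPolynomial (Fin n) K, aeval b g = 0 ∧ aeval a g ≠ 0 := by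
  obtain ⟨k, hk⟩ := Function.ne_iff.1 hab
  refine ⟨X k - C (b k), by simp, ?_⟩
  simp only [map_sub, aeval_X, aeval_C, Algebra.algebraMap_self_apply]
  exact sub_ne_zero.2 hk

lemma mem_hankelKer_iff {σ : Module.Dual K (MvPolynomial (Fin n) K)}
    {p : MvPolynomial (Fin n) K} :
    p ∈ PolyExp.hankelKer σ ↔ ∀ q, σ (p * q) = 0 := Iff.rfl


end PolyExpAux

/-- If `σ = Σᵢ ωᵢ·e_{ξᵢ}` with nonzero polynomial weights and pairwise
distinct points, then the zero set of the ideal `I_σ = ker H_σ` is exactly `{ξ₁,…,ξ_{r'}}`. -/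
theorem statement7 {K : Type*} [Field K] [CharZero K] [IsAlgClosed K] {n : ℕ}
    (r' : ℕ) (ξ : Fin r' → Fin n → K) (hξ : Function.Injective ξ)
    (ω : Fin r' → MvPolynomial (Fin n) K) (hω : ∀ i, ω i ≠ 0)
    (σ : Module.Dual K (MvPolynomial (Fin n) K))
    (hσ : σ = ∑ i, PolyExp.polyExpDual (ω i) (ξ i)) :
    {x : Fin n → K | ∀ p ∈ PolyExp.hankelKer σ, MvPolynomial.aeval x p = 0} =
      Set.range ξ := by
  classical
  set N : ℕ := (Finset.univ.sup fun j => (ω j).totalDegree) + 1 with hN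
  have hNj : ∀ j, (ω j).totalDegree < N := by
    intro j
    exact Nat.lt_succ_of_le (Finset.le_sup (f := fun j => (ω j).totalDegree) (Finset.mem_univ j))
  ext x
  simp only [Set.mem_setOf_eq]
  constructor
  · intro hx
    by_contra hxr
    have hxj : ∀ j, x ≠ ξ j := fun j h => hxr ⟨j, h.symm⟩
    have hsep : ∀ j : Fin r', ∃ g : MvPolynomial (Fin n) K,
        aeval (ξ j) g = 0 ∧ aeval x g ≠ 0 := fun j => PolyExpAux.exists_sep x (ξ j) (hxj j)
    choose g hg1 hg2 using hsep
    set p : MvPolynomial (Fin n) K := ∏ j, (g j) ^ N with hp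
    have hpI : p ∈ PolyExp.hankelKer σ := by
      rw [PolyExpAux.mem_hankelKer_iff]
      intro q
      rw [hσ, LinearMap.sum_apply]
      apply Finset.sum_eq_zero
      intro j _
      refine PolyExpAux.polyExpDual_eq_zero (ω j) (g j) _ (ξ j) (hg1 j) N (hNj j) ?_
      exact dvd_mul_of_dvd_left (Finset.dvd_prod_of_mem (fun j => (g j) ^ N)
        (Finset.mem_univ j)) q
    have := hx p hpI
    rw [hp, map_prod] at this
    have hne : (∏ j, aeval x ((g j) ^ N) : K) ≠ 0 :=
      Finset.prod_ne_zero_iff.2 (fun j _ => by rw [map_pow]; exact pow_ne_zero _ (hg2 j))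
    exact hne this
  · rintro ⟨i, rfl⟩ p hp
    by_contra hpx
    have hsep : ∀ j : Fin r', ∃ g : MvPolynomial (Fin n) K,
        (j ≠ i → aeval (ξ j) g = 0 ∧ aeval (ξ i) g ≠ 0) ∧ (j = i → g = 1) := by
      intro j
      rcases eq_or_ne j i with rfl | hj
      · exact ⟨1, fun h => absurd rfl h, fun _ => rfl⟩
      · obtain ⟨g, hg1, hg2⟩ := PolyExpAux.exists_sep (ξ i) (ξ j) (hξ.ne (Ne.symm hj))
        exact ⟨g, fun _ => ⟨hg1, hg2⟩, fun h => absurd h hj⟩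
    choose g hg using hsep
    set F : MvPolynomial (Fin n) K := p * ∏ j ∈ Finset.univ.erase i, (g j) ^ N with hF
    have h1 : ∀ q, PolyExp.polyExpDual (ω i) (ξ i) (F * q) = 0 := by
      intro q
      have hq := hp ((∏ j ∈ Finset.univ.erase i, (g j) ^ N) * q)
      rw [hσ, LinearMap.sum_apply] at hq
      have hassoc : p * ((∏ j ∈ Finset.univ.erase i, (g j) ^ N) * q) = F * q := by
        rw [hF]; ring
      rw [hassoc] at hq
      rw [← hq]
      symm
      apply Finset.sum_eq_single_of_mem i (Finset.mem_univ i)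
      intro j _ hji
      refine PolyExpAux.polyExpDual_eq_zero (ω j) (g j) _ (ξ j) ((hg j).1 hji).1 N (hNj j) ?_
      refine dvd_mul_of_dvd_left (dvd_mul_of_dvd_right ?_ p) q
      exact Finset.dvd_prod_of_mem (fun j => (g j) ^ N) (Finset.mem_erase.2 ⟨hji, Finset.mem_univ j⟩)
    have hFval : aeval (ξ i) F ≠ 0 := by
      rw [hF, map_mul, map_prod]
      refine mul_ne_zero hpx ?_
      apply Finset.prod_ne_zero_iff.2
      intro j hj
      rw [map_pow]
      exact pow_ne_zero _ ((hg j).1 (Finset.mem_erase.1 hj).1).2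
    obtain ⟨q, hq⟩ := PolyExpAux.exists_polyExpDual_ne_zero (ω i) F (ξ i) (hω i) hFval
    exact hq (h1 q)
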